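/- There exists a real constant ε₀ > 0 such that for every real ε with 0 < ε < ε₀, every simple graph G on a finite vertex set, every nontrivial cluster C of the agreement decomposition of G with parameter ε, and all vertices u, v ∈ C, the neighborhoods intersect: N(u) ∩ N(v) ≠ ∅. -/

import Mathlib

open scoped symmDiff Classical

set_option maxHeartbeats 1000000
set_option linter.unusedSectionVars false

/-- Two vertices `u, v` are in `ε`-agreement in `G` if
`|N(u) △ N(v)| < ε·max(|N(u)|, |N(v)|)`. -/
def InAgreement {V : Type*} [Fintype V] [DecidableEq V]
    (G : SimpleGraph V) [DecidableRel G.Adj] (ε : ℝ) (u v : V) : Prop :=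
  ((G.neighborFinset u ∆ G.neighborFinset v).card : ℝ) <
    ε * (max (G.neighborFinset u).card (G.neighborFinset v).card : ℕ)

/-- A vertex is `ε`-heavy if it is in `ε`-agreement with more than a
`(1 − ε)`-fraction of its neighbors. -/
noncomputable def Heavy {V : Type*} [Fintype V] [DecidableEq V]
    (G : SimpleGraph V) [DecidableRel G.Adj] (ε : ℝ) (u : V) : Prop :=
  (1 - ε) * ((G.neighborFinset u).card : ℝ) <
    (((G.neighborFinset u).filter (fun v => InAgreement G ε u v)).card : ℝ)

/-- The graph `G̃` obtained from `G` by deleting every edge whose endpoints are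
not in `ε`-agreement and then every remaining edge both of whose endpoints are
`ε`-light. -/
noncomputable def tildeGraph {V : Type*} [Fintype V] [DecidableEq V]
    (G : SimpleGraph V) [DecidableRel G.Adj] (ε : ℝ) : SimpleGraph V where
  Adj u v := G.Adj u v ∧ InAgreement G ε u v ∧ (Heavy G ε u ∨ Heavy G ε v)
  symm := ⟨by
    intro u v ⟨h1, h2, h3⟩
    refine ⟨h1.symm, ?_, h3.symm⟩
    unfold InAgreement at h2 ⊢
    rwa [symmDiff_comm, max_comm]⟩
  loopless := ⟨fun u h => G.irrefl h.1⟩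

/-- `C` is a cluster of the agreement decomposition of `G` with parameter `ε`:
the vertex set of a connected component of `G̃`. -/
noncomputable def IsCluster {V : Type*} [Fintype V] [DecidableEq V]
    (G : SimpleGraph V) [DecidableRel G.Adj] (ε : ℝ) (C : Finset V) : Prop :=
  ∃ v : V, C = Finset.univ.filter (fun w => (tildeGraph G ε).Reachable v w)

section Aux

variable {V : Type*} [Fintype V] [DecidableEq V] (G : SimpleGraph V) [DecidableRel G.Adj]

/-- degree as a real -/
noncomputable def degR (u : V) : ℝ := ((G.neighborFinset u).card : ℝ)

/-- symmetric difference size as a real -/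
noncomputable def sdR (u v : V) : ℝ := (((G.neighborFinset u) ∆ (G.neighborFinset v)).card : ℝ)

/-- max degree of the two -/
noncomputable def mxR (u v : V) : ℝ := max (degR G u) (degR G v)

lemma agree_iff (δ : ℝ) (u v : V) :
    InAgreement G δ u v ↔ sdR G u v < δ * mxR G u v := by
  unfold InAgreement sdR mxR degR
  rw [Nat.cast_max]

lemma sdR_nonneg (u v : V) : 0 ≤ sdR G u v := Nat.cast_nonneg _

lemma degR_nonneg (u : V) : 0 ≤ degR G u := Nat.cast_nonneg _

lemma mxR_nonneg (u v : V) : 0 ≤ mxR G u v := le_max_of_le_left (degR_nonneg G u)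

lemma sdR_comm (u v : V) : sdR G u v = sdR G v u := by
  unfold sdR; rw [symmDiff_comm]

lemma mxR_comm (u v : V) : mxR G u v = mxR G v u := max_comm _ _

lemma sdR_self (u : V) : sdR G u u = 0 := by
  simp [sdR]

lemma degR_le_mxR (u v : V) : degR G u ≤ mxR G u v := le_max_left _ _

lemma degR_le_mxR' (u v : V) : degR G v ≤ mxR G u v := le_max_right _ _

lemma degR_le (u v : V) : degR G u ≤ degR G v + sdR G u v := by
  have hsub : G.neighborFinset u ⊆
      G.neighborFinset v ∪ (G.neighborFinset u ∆ G.neighborFinset v) := by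
    intro x hx
    by_cases h : x ∈ G.neighborFinset v
    · exact Finset.mem_union_left _ h
    · exact Finset.mem_union_right _ (by simp [Finset.mem_symmDiff, hx, h])
  have h1 := Finset.card_le_card hsub
  have h2 := Finset.card_union_le (G.neighborFinset v)
    (G.neighborFinset u ∆ G.neighborFinset v)
  unfold degR sdR
  exact_mod_cast le_trans h1 h2

lemma sdR_triangle (u v w : V) : sdR G u w ≤ sdR G u v + sdR G v w := by
  have h := symmDiff_triangle (G.neighborFinset u) (G.neighborFinset v) (G.neighborFinset w)
  have h1 := Finset.card_le_card h
  have h2 := Finset.card_union_le (G.neighborFinset u ∆ G.neighborFinset v)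
    (G.neighborFinset v ∆ G.neighborFinset w)
  unfold sdR
  exact_mod_cast le_trans h1 h2

lemma mxR_lt {δ : ℝ} {u v : V} (h : sdR G u v < δ * mxR G u v) :
    (1 - δ) * mxR G u v < degR G u := by
  have h1 : degR G v ≤ degR G u + sdR G u v := by
    have := degR_le G v u; rwa [sdR_comm] at this
  have h2 : degR G u ≤ degR G u + sdR G u v := by linarith [sdR_nonneg G u v]
  have h3 : mxR G u v ≤ degR G u + sdR G u v := max_le h2 h1
  linarith

lemma mxR_pos {δ : ℝ} (hδ : 0 < δ) {u v : V} (h : sdR G u v < δ * mxR G u v) :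
    0 < mxR G u v := by
  nlinarith [sdR_nonneg G u v, mxR_nonneg G u v]

lemma agree_trans {δ1 δ2 : ℝ} (h1p : 0 < δ1) (h13 : δ1 ≤ 1/3) (h2p : 0 < δ2) (h23 : δ2 ≤ 1/3)
    {a b c : V} (h1 : sdR G a b < δ1 * mxR G a b) (h2 : sdR G b c < δ2 * mxR G b c) :
    sdR G a c < (3/2) * (δ1 + δ2) * mxR G a c := by
  have ha := mxR_lt G h1
  have h2' : sdR G c b < δ2 * mxR G c b := by
    rw [sdR_comm, mxR_comm]; exact h2
  have hc := mxR_lt G h2'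
  rw [mxR_comm] at hc
  have hab0 : 0 ≤ mxR G a b := mxR_nonneg G a b
  have hbc0 : 0 ≤ mxR G b c := mxR_nonneg G b c
  -- mx ab < (3/2) deg a ≤ (3/2) mx a c
  have hmab : mxR G a b < (3/2) * degR G a := by nlinarith
  have hmbc : mxR G b c < (3/2) * degR G c := by nlinarith
  have hda : degR G a ≤ mxR G a c := degR_le_mxR G a c
  have hdc : degR G c ≤ mxR G a c := degR_le_mxR' G a c
  have ht := sdR_triangle G a b c
  nlinarith

lemma agree_inter_nonempty {δ : ℝ} (hδ0 : 0 < δ) (hδ1 : δ < 1) {u v : V}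
    (h : sdR G u v < δ * mxR G u v) :
    (G.neighborFinset u ∩ G.neighborFinset v).Nonempty := by
  rw [Finset.nonempty_iff_ne_empty]
  intro hemp
  have hd : Disjoint (G.neighborFinset u) (G.neighborFinset v) :=
    Finset.disjoint_iff_inter_eq_empty.mpr hemp
  have hsd : G.neighborFinset u ∆ G.neighborFinset v
      = G.neighborFinset u ∪ G.neighborFinset v := hd.symmDiff_eq_sup
  have h1 : degR G u ≤ sdR G u v := by
    unfold degR sdR
    rw [hsd]
    exact_mod_cast Finset.card_le_card Finset.subset_union_left
  have h2 : degR G v ≤ sdR G u v := by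
    unfold degR sdR
    rw [hsd]
    exact_mod_cast Finset.card_le_card Finset.subset_union_right
  have hm : mxR G u v ≤ sdR G u v := max_le h1 h2
  have hmx : 0 < mxR G u v := mxR_pos G hδ0 h
  nlinarith

lemma heavy_deg_pos {ε : ℝ} (hε : 0 < ε) {u : V} (h : Heavy G ε u) : 0 < degR G u := by
  unfold Heavy at h
  have hle : (((G.neighborFinset u).filter (fun v => InAgreement G ε u v)).card : ℝ)
      ≤ degR G u := by
    unfold degR
    exact_mod_cast Finset.card_le_card (Finset.filter_subset _ _)
  unfold degR at *
  nlinarith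

lemma heavy_self_agree {ε δ : ℝ} (hε : 0 < ε) (hδ : 0 < δ) {u : V} (h : Heavy G ε u) :
    sdR G u u < δ * mxR G u u := by
  have := heavy_deg_pos G hε h
  rw [sdR_self]
  have : 0 < mxR G u u := lt_of_lt_of_le this (degR_le_mxR G u u)
  positivity

lemma self_improve {ε δ : ℝ} (hε0 : 0 < ε) (hε1 : ε < 1/100) (hδ0 : 0 < δ) (hδ1 : δ ≤ 1/8)
    {a b : V} (ha : Heavy G ε a) (hb : Heavy G ε b)
    (h : sdR G a b < δ * mxR G a b) :
    sdR G a b < 3 * ε * mxR G a b := by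
  classical
  set A := G.neighborFinset a with hA
  set B := G.neighborFinset b with hB
  set Sa := A.filter (fun v => InAgreement G ε a v) with hSa
  set Sb := B.filter (fun v => InAgreement G ε b v) with hSb
  have hha : (1 - ε) * degR G a < (Sa.card : ℝ) := ha
  have hhb : (1 - ε) * degR G b < (Sb.card : ℝ) := hb
  have hmx : 0 < mxR G a b := mxR_pos G hδ0 h
  have hda : (1 - δ) * mxR G a b < degR G a := mxR_lt G h
  have hdb : (1 - δ) * mxR G a b < degR G b := by
    have h' : sdR G b a < δ * mxR G b a := by rw [sdR_comm, mxR_comm]; exact h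
    have := mxR_lt G h'
    rwa [mxR_comm] at this
  -- find w in Sa ∩ Sb
  have hkey : (Sa ∩ Sb).Nonempty := by
    rw [Finset.nonempty_iff_ne_empty]
    intro hemp
    have hTa : Sa ∩ B ⊆ A ∩ B := Finset.inter_subset_inter (Finset.filter_subset _ _) le_rfl
    have hTb : Sb ∩ A ⊆ A ∩ B := by
      intro x hx
      rw [Finset.mem_inter] at hx ⊢
      exact ⟨hx.2, Finset.filter_subset _ _ hx.1⟩
    have hdisj : Disjoint (Sa ∩ B) (Sb ∩ A) := by
      rw [Finset.disjoint_left]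
      intro x hx1 hx2
      have hx : x ∈ Sa ∩ Sb := Finset.mem_inter.mpr
        ⟨(Finset.mem_inter.mp hx1).1, (Finset.mem_inter.mp hx2).1⟩
      rw [hemp] at hx
      exact absurd hx (Finset.notMem_empty x)
    have hcard : (Sa ∩ B).card + (Sb ∩ A).card ≤ (A ∩ B).card := by
      rw [← Finset.card_union_of_disjoint hdisj]
      exact Finset.card_le_card (Finset.union_subset hTa hTb)
    have hSaB : (Sa.card : ℝ) - sdR G a b ≤ ((Sa ∩ B).card : ℝ) := by
      have hsub : Sa \ B ⊆ A ∆ B := by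
        intro x hx
        rw [Finset.mem_sdiff] at hx
        rw [Finset.mem_symmDiff]
        exact Or.inl ⟨Finset.filter_subset _ _ hx.1, hx.2⟩
      have h1 : (Sa ∩ B).card + (Sa \ B).card = Sa.card :=
        Finset.card_inter_add_card_sdiff Sa B
      have h2 : (Sa \ B).card ≤ (A ∆ B).card := Finset.card_le_card hsub
      have h1' : ((Sa ∩ B).card : ℝ) + ((Sa \ B).card : ℝ) = (Sa.card : ℝ) := by
        exact_mod_cast h1
      have h2' : ((Sa \ B).card : ℝ) ≤ sdR G a b := by
        unfold sdR; rw [← hA, ← hB]; exact_mod_cast h2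
      linarith
    have hSbA : (Sb.card : ℝ) - sdR G a b ≤ ((Sb ∩ A).card : ℝ) := by
      have hsub : Sb \ A ⊆ A ∆ B := by
        intro x hx
        rw [Finset.mem_sdiff] at hx
        rw [Finset.mem_symmDiff]
        exact Or.inr ⟨Finset.filter_subset _ _ hx.1, hx.2⟩
      have h1 : (Sb ∩ A).card + (Sb \ A).card = Sb.card :=
        Finset.card_inter_add_card_sdiff Sb A
      have h2 : (Sb \ A).card ≤ (A ∆ B).card := Finset.card_le_card hsub
      have h1' : ((Sb ∩ A).card : ℝ) + ((Sb \ A).card : ℝ) = (Sb.card : ℝ) := by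
        exact_mod_cast h1
      have h2' : ((Sb \ A).card : ℝ) ≤ sdR G a b := by
        unfold sdR; rw [← hA, ← hB]; exact_mod_cast h2
      linarith
    have hABmx : ((A ∩ B).card : ℝ) ≤ mxR G a b := by
      have h1 : (A ∩ B).card ≤ A.card := Finset.card_le_card Finset.inter_subset_left
      have h2 : ((A ∩ B).card : ℝ) ≤ degR G a := by
        unfold degR; rw [← hA]; exact_mod_cast h1
      exact le_trans h2 (degR_le_mxR G a b)
    have hcard' : ((Sa ∩ B).card : ℝ) + ((Sb ∩ A).card : ℝ) ≤ ((A ∩ B).card : ℝ) := by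
      exact_mod_cast hcard
    have hεmx : ε * mxR G a b < (1/100) * mxR G a b :=
      mul_lt_mul_of_pos_right hε1 hmx
    have hδmx : δ * mxR G a b ≤ (1/8) * mxR G a b :=
      mul_le_mul_of_nonneg_right hδ1 hmx.le
    have hp1 : (1 - ε) * ((1 - δ) * mxR G a b) < (1 - ε) * degR G a :=
      mul_lt_mul_of_pos_left hda (by linarith)
    have hp2 : (1 - ε) * ((1 - δ) * mxR G a b) < (1 - ε) * degR G b :=
      mul_lt_mul_of_pos_left hdb (by linarith)
    have hεδmx : 0 ≤ ε * δ * mxR G a b := by positivity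
    nlinarith [hSaB, hSbA, hcard', hABmx, hha, hhb, hp1, hp2, hεmx, hδmx, hεδmx, h, hmx]
  obtain ⟨w, hw⟩ := hkey
  rw [Finset.mem_inter, hSa, hSb, Finset.mem_filter, Finset.mem_filter] at hw
  have haw : sdR G a w < ε * mxR G a w := (agree_iff G ε a w).mp hw.1.2
  have hbw : sdR G b w < ε * mxR G b w := (agree_iff G ε b w).mp hw.2.2
  have hwb : sdR G w b < ε * mxR G w b := by rw [sdR_comm, mxR_comm]; exact hbw
  have := agree_trans G hε0 (by linarith) hε0 (by linarith) haw hwb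
  calc sdR G a b < (3/2) * (ε + ε) * mxR G a b := this
    _ = 3 * ε * mxR G a b := by ring

lemma walk_agree {ε : ℝ} (hε0 : 0 < ε) (hε1 : ε < 1/100) {a x : V}
    (w : (tildeGraph G ε).Walk x a) (ha : Heavy G ε a) :
    ∃ h : V, Heavy G ε h ∧ sdR G a h < 3 * ε * mxR G a h ∧ sdR G h x < ε * mxR G h x := by
  revert ha
  induction w with
  | nil =>
    intro ha
    exact ⟨_, ha, heavy_self_agree G hε0 (by linarith) ha,
      heavy_self_agree G hε0 hε0 ha⟩
  | @cons x y z hadj w ih =>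
    intro ha
    obtain ⟨hG, hag, hheavy⟩ := hadj
    obtain ⟨h, hh, h1, h2⟩ := ih ha
    have hxy : sdR G x y < ε * mxR G x y := (agree_iff G ε x y).mp hag
    have hyx : sdR G y x < ε * mxR G y x := by rw [sdR_comm, mxR_comm]; exact hxy
    rcases hheavy with hx | hy
    · -- x is heavy
      have hay : sdR G z y < (3/2) * (3*ε + ε) * mxR G z y :=
        agree_trans G (by linarith) (by linarith) hε0 (by linarith) h1 h2
      rw [show (3/2) * (3*ε + ε) = 6*ε by ring] at hay
      have hax : sdR G z x < (3/2) * (6*ε + ε) * mxR G z x :=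
        agree_trans G (by linarith) (by linarith) hε0 (by linarith) hay hyx
      rw [show (3/2) * (6*ε + ε) = (21/2)*ε by ring] at hax
      have hax' := self_improve G hε0 hε1 (by linarith) (by linarith) ha hx hax
      exact ⟨x, hx, hax', heavy_self_agree G hε0 hε0 hx⟩
    · -- y is heavy
      have hay : sdR G z y < (3/2) * (3*ε + ε) * mxR G z y :=
        agree_trans G (by linarith) (by linarith) hε0 (by linarith) h1 h2
      rw [show (3/2) * (3*ε + ε) = 6*ε by ring] at hay
      have hay' := self_improve G hε0 hε1 (by linarith) (by linarith) ha hy hay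
      exact ⟨y, hy, hay', hyx⟩

end Aux

/-- Property 11: for every nontrivial cluster `C` of the agreement decomposition
and all `u, v ∈ C`, the neighborhoods intersect: `N(u) ∩ N(v) ≠ ∅`. -/
theorem cluster_nbr_inter_nbr_nonempty :
    ∃ ε₀ : ℝ, 0 < ε₀ ∧
      ∀ (V : Type) (_ : Fintype V) (_ : DecidableEq V)
        (G : SimpleGraph V) (_ : DecidableRel G.Adj) (ε : ℝ), 0 < ε → ε < ε₀ →
        ∀ C : Finset V, IsCluster G ε C → 1 < C.card →
          ∀ u ∈ C, ∀ v ∈ C,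
            (G.neighborFinset u ∩ G.neighborFinset v).Nonempty := by
  refine ⟨1/100, by norm_num, ?_⟩
  intro V _ _ G _ ε hε0 hε1 C hC hcard u hu v hv
  obtain ⟨v0, rfl⟩ := hC
  rw [Finset.mem_filter] at hu hv
  have hreach : (tildeGraph G ε).Reachable u v := hu.2.symm.trans hv.2
  by_cases huv : u = v
  · subst huv
    obtain ⟨z, hz, hzu⟩ := Finset.exists_mem_ne hcard u
    rw [Finset.mem_filter] at hz
    have hzr : (tildeGraph G ε).Reachable u z := hu.2.symm.trans hz.2
    obtain ⟨w⟩ := hzr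
    cases w with
    | nil => exact absurd rfl hzu
    | @cons _ b _ hadj w' =>
      have hG : G.Adj u b := hadj.1
      exact ⟨b, Finset.mem_inter.mpr ⟨(G.mem_neighborFinset u b).mpr hG,
        (G.mem_neighborFinset u b).mpr hG⟩⟩
  · obtain ⟨w⟩ := hreach
    cases w with
    | nil => exact absurd rfl huv
    | @cons _ b _ hadj w' =>
      have hcons := SimpleGraph.Walk.cons hadj w'
      obtain ⟨hG, hag, hheavy⟩ := hadj
      have hub : sdR G u b < ε * mxR G u b := (agree_iff G ε u b).mp hag
      rcases hheavy with hhu | hhb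
      · obtain ⟨h, hh, h1, h2⟩ := walk_agree G hε0 hε1
          hcons.reverse hhu
        have huv' : sdR G u v < (3/2) * (3*ε + ε) * mxR G u v :=
          agree_trans G (by linarith) (by linarith) hε0 (by linarith) h1 h2
        exact agree_inter_nonempty G
          (show (0:ℝ) < (3/2) * (3*ε + ε) by nlinarith)
          (by nlinarith) huv'
      · obtain ⟨h, hh, h1, h2⟩ := walk_agree G hε0 hε1 w'.reverse hhb
        have huh : sdR G u h < (3/2) * (ε + 3*ε) * mxR G u h :=
          agree_trans G hε0 (by linarith) (by linarith) (by linarith) hub h1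
        rw [show (3/2) * (ε + 3*ε) = 6*ε by ring] at huh
        have huv' : sdR G u v < (3/2) * (6*ε + ε) * mxR G u v :=
          agree_trans G (by linarith) (by linarith) hε0 (by linarith) huh h2
        exact agree_inter_nonempty G
          (show (0:ℝ) < (3/2) * (6*ε + ε) by nlinarith)
          (by nlinarith) huv'
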